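/- Let G be an infinite discrete group and let X be a minimal G-flow. Suppose there exists an infinite subgroup H ≤ G such that the restricted action of H on X is equicontinuous. Then X has the separated covering property. -/

import Mathlib

open Pointwise

section Defs

variable (G : Type*) [Group G]

/-- The right-shift of `G` on `G → A`: `(g • z) h = z (h * g)`. -/
instance (priority := high) shiftSMul (A : Type*) : SMul G (G → A) :=
  ⟨fun g z h => z (h * g)⟩

/-- The right-shift action of `G` on `G → A` is a `G`-action (the Bernoulli flow when
`A = Bool`). -/
instance shiftMulAction (A : Type*) : MulAction G (G → A) where
  one_smul z := funext fun h => by show z (h * 1) = z h; rw [mul_one]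
  mul_smul g₁ g₂ z := funext fun h => by
    show z (h * (g₁ * g₂)) = z (h * g₁ * g₂)
    rw [mul_assoc]

/-- `S ⊆ G` is `D`-separated if `Dg ∩ Dh = ∅` for all distinct `g, h ∈ S`. -/
def DSeparated (D S : Set G) : Prop :=
  ∀ g ∈ S, ∀ h ∈ S, g ≠ h → Disjoint (D * ({g} : Set G)) (D * ({h} : Set G))

/-- The separated covering property for a `G`-flow `X`: for every finite `D ⊆ G`
and every nonempty open `U ⊆ X` there is a `D`-separated `S ⊆ G` with `S⁻¹U = X`. -/
def SCP (X : Type*) [TopologicalSpace X] [MulAction G X] : Prop :=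
  ∀ D : Set G, D.Finite → ∀ U : Set X, IsOpen U → U.Nonempty →
    ∃ S : Set G, DSeparated G D S ∧ ∀ x : X, ∃ s ∈ S, s • x ∈ U

/-- A `G`-flow is minimal if every orbit is dense. -/
def IsMinimalFlow (X : Type*) [TopologicalSpace X] [MulAction G X] : Prop :=
  ∀ x : X, Dense (MulAction.orbit G x)

/-- Two `G`-flows `X` and `Y` are disjoint if the only closed `G`-invariant subset of
`X × Y` projecting onto both factors is `X × Y` itself. -/
def FlowsDisjoint (X Y : Type*) [TopologicalSpace X] [TopologicalSpace Y]
    [MulAction G X] [MulAction G Y] : Prop :=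
  ∀ J : Set (X × Y), IsClosed J → (∀ (g : G), ∀ p ∈ J, g • p ∈ J) →
    Prod.fst '' J = Set.univ → Prod.snd '' J = Set.univ → J = Set.univ

end Defs

open Pointwise

lemma exists_cluster' {G X : Type*} [SMul G X] [TopologicalSpace X] [CompactSpace X]
    (H : Set G) (hH : H.Infinite) (x : X) :
    ∃ y : X, ∀ N : Set X, IsOpen N → y ∈ N → {h ∈ H | h • x ∈ N}.Infinite := by
  by_contra hc
  push_neg at hc
  choose N hNo hNy hNfin using hc
  obtain ⟨t, ht⟩ := isCompact_univ.elim_finite_subcover N hNo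
    (fun y _ => Set.mem_iUnion.2 ⟨y, hNy y⟩)
  have : H ⊆ ⋃ y ∈ t, {h ∈ H | h • x ∈ N y} := by
    intro h hh
    obtain ⟨y, hy, hmem⟩ := Set.mem_iUnion₂.1 (ht (Set.mem_univ (h • x)))
    exact Set.mem_iUnion₂.2 ⟨y, hy, hh, hmem⟩
  exact hH (Set.Finite.subset (t.finite_toSet.biUnion
    (fun y _ => hNfin y)) this)

lemma greedy' {G : Type*} [Group G] (R : Set G) (hR : R.Infinite)
    (C : Set G) (hC : C.Finite) (F : Finset G) :
    ∃ φ : G → G, (∀ f ∈ F, φ f ∈ R) ∧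
      ∀ f ∈ F, ∀ f' ∈ F, f ≠ f' → ∀ c ∈ C, φ f * f * f'⁻¹ * (φ f')⁻¹ ≠ c := by
  classical
  induction F using Finset.induction with
  | empty => exact ⟨id, by simp, by simp⟩
  | @insert a F haF ih =>
    obtain ⟨φ, hφR, hφsep⟩ := ih
    have hEx : (⋃ f ∈ F, ((fun c => c * φ f * f * a⁻¹) '' C ∪
        (fun c => c⁻¹ * φ f * f * a⁻¹) '' C)).Finite :=
      F.finite_toSet.biUnion (fun f _ => (hC.image _).union (hC.image _))
    obtain ⟨h, hhR, hhEx⟩ := (hR.diff hEx).nonempty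
    refine ⟨Function.update φ a h, ?_, ?_⟩
    · intro f hf
      rcases Finset.mem_insert.1 hf with hfa | hf
      · rw [hfa, Function.update_self]; exact hhR
      · rw [Function.update_of_ne (ne_of_mem_of_not_mem hf haF)]; exact hφR f hf
    · intro f hf f' hf' hne c hc heq
      rcases Finset.mem_insert.1 hf with hfa | hf2 <;>
        rcases Finset.mem_insert.1 hf' with hfa' | hf2'
      · exact hne (hfa.trans hfa'.symm)
      · subst hfa
        rw [Function.update_self, Function.update_of_ne (ne_of_mem_of_not_mem hf2' haF)] at heq
        apply hhEx
        refine Set.mem_iUnion₂.2 ⟨f', hf2', Or.inl ⟨c, hc, ?_⟩⟩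
        rw [← heq]; group
      · subst hfa'
        rw [Function.update_self, Function.update_of_ne (ne_of_mem_of_not_mem hf2 haF)] at heq
        apply hhEx
        refine Set.mem_iUnion₂.2 ⟨f, hf2, Or.inr ⟨c, hc, ?_⟩⟩
        rw [← heq]; group
      · rw [Function.update_of_ne (ne_of_mem_of_not_mem hf2 haF),
          Function.update_of_ne (ne_of_mem_of_not_mem hf2' haF)] at heq
        exact hφsep f hf2 f' hf2' hne c hc heq


/-- Let `X` be a minimal `G`-flow and suppose there is an infinite
subgroup `H ≤ G` whose restricted action on `X` is equicontinuous (in the topological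
sense: for every open `U ⊆ X × X` containing the diagonal there is an open `V ⊆ X × X`
containing the diagonal such that `(x, y) ∈ V` implies `(h•x, h•y) ∈ U` for all `h ∈ H`).
Then `X` has the separated covering property. -/
theorem SCP_of_equicontinuous_infinite_subgroup
    (G : Type*) [Group G] [Infinite G]
    (X : Type*) [TopologicalSpace X] [CompactSpace X] [T2Space X] [Nonempty X]
    [MulAction G X] [ContinuousConstSMul G X]
    (hXmin : IsMinimalFlow G X)
    (H : Subgroup G) (hHinf : (H : Set G).Infinite)
    (hequi : ∀ U : Set (X × X), IsOpen U → (∀ x : X, (x, x) ∈ U) →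
      ∃ V : Set (X × X), IsOpen V ∧ (∀ x : X, (x, x) ∈ V) ∧
        ∀ p ∈ V, ∀ h ∈ H, ((h • p.1, h • p.2) ∈ U)) :
    SCP G X := by
  intro D hD U hU hUne
  obtain ⟨x₀⟩ := (inferInstance : Nonempty X)
  obtain ⟨y, hy⟩ := exists_cluster' (H : Set G) hHinf x₀
  obtain ⟨z, hzorb, hzU⟩ := (hXmin y).exists_mem_open hU hUne
  obtain ⟨g, rfl⟩ := hzorb
  set U' : Set X := (g • ·) ⁻¹' U with hU'def
  have hU'open : IsOpen U' := hU.preimage (continuous_const_smul g)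
  have hyU' : y ∈ U' := hzU
  obtain ⟨Cl, hClnhds, hClclosed, hClsub⟩ :=
    exists_mem_nhds_isClosed_subset (hU'open.mem_nhds hyU')
  set N := interior Cl with hNdef
  have hNopen : IsOpen N := isOpen_interior
  have hyN : y ∈ N := mem_interior_iff_mem_nhds.2 hClnhds
  have hclN : closure N ⊆ U' := (closure_minimal interior_subset hClclosed).trans hClsub
  set E : Set (X × X) := ((closure N) ×ˢ U'ᶜ)ᶜ with hEdef
  have hEopen : IsOpen E := (isClosed_closure.prod hU'open.isClosed_compl).isOpen_compl
  have hEdiag : ∀ x : X, (x, x) ∈ E := by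
    intro x hx
    exact hx.2 (hclN hx.1)
  obtain ⟨V, hVopen, hVdiag, hVE⟩ := hequi E hEopen hEdiag
  set W : Set X := {w | (x₀, w) ∈ V} with hWdef
  have hWopen : IsOpen W := hVopen.preimage (Continuous.prodMk_right x₀)
  have hx₀W : x₀ ∈ W := hVdiag x₀
  set R : Set G := {h ∈ (H : Set G) | h • x₀ ∈ N} with hRdef
  have hRinf : R.Infinite := hy N hNopen hyN
  have hkey : ∀ h ∈ R, ∀ w ∈ W, g • (h • w) ∈ U := by
    intro h hh w hw
    have hE := hVE (x₀, w) hw h hh.1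
    have hhw : h • w ∈ U' := by
      by_contra hcon
      exact hE ⟨subset_closure hh.2, hcon⟩
    exact hhw
  have hcov : (Set.univ : Set X) ⊆ ⋃ f : G, (fun x => f • x) ⁻¹' W := by
    intro x _
    obtain ⟨z, ⟨f, rfl⟩, hz⟩ := (hXmin x).exists_mem_open hWopen ⟨x₀, hx₀W⟩
    exact Set.mem_iUnion.2 ⟨f, hz⟩
  obtain ⟨F, hF⟩ := isCompact_univ.elim_finite_subcover _
    (fun f : G => hWopen.preimage (continuous_const_smul f)) hcov
  set C' : Set G := (fun p : G × G => g⁻¹ * p.1⁻¹ * p.2 * g) '' (D ×ˢ D) with hC'def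
  have hC'fin : C'.Finite := (hD.prod hD).image _
  obtain ⟨φ, hφR, hφsep⟩ := greedy' R hRinf C' hC'fin F
  refine ⟨(fun f => g * φ f * f) '' F, ?_, ?_⟩
  · rintro s ⟨f, hf, rfl⟩ t ⟨f', hf', rfl⟩ hst
    have hff' : f ≠ f' := by rintro rfl; exact hst rfl
    rw [Set.disjoint_left]
    rintro a ha ha'
    rw [Set.mem_mul] at ha ha'
    obtain ⟨d, hd, b, hb, rfl⟩ := ha
    obtain ⟨d', hd', b', hb', hdd'⟩ := ha'
    rw [Set.mem_singleton_iff] at hb hb'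
    subst hb; subst hb'
    refine hφsep f hf f' hf' hff' (g⁻¹ * d⁻¹ * d' * g) ⟨(d, d'), ⟨hd, hd'⟩, rfl⟩ ?_
    rw [show (g⁻¹ * d⁻¹ * d' * g : G) =
      g⁻¹ * d⁻¹ * (d' * (g * φ f' * f')) * (f'⁻¹ * (φ f')⁻¹ * g⁻¹ * g) from by group, hdd']
    group
  · intro x
    have := hF (Set.mem_univ x)
    rw [Set.mem_iUnion₂] at this
    obtain ⟨f, hfF, hfx⟩ := this
    refine ⟨g * φ f * f, ⟨f, hfF, rfl⟩, ?_⟩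
    rw [mul_smul, mul_smul]
    exact hkey (φ f) (hφR f hfF) (f • x) hfx
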